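/- For all integers n ≥ 3, C(2n − 1, n − 3) < 2^{2n − 4}, where C(a,b) denotes the binomial coefficient (with C(a,b) = 1 when b = 0). -/

import Mathlib

lemma aux18 (m : ℕ) : Nat.choose (2 * m + 5) m < 2 ^ (2 * m + 2) := by
  induction m with
  | zero => decide
  | succ m ih =>
    by_cases h : m ≤ 8
    · interval_cases m <;> decide
    · push_neg at h
      have h1 := Nat.add_one_mul_choose_eq (2 * m + 5) m
      have h2 := Nat.choose_mul_succ_eq (2 * m + 6) (m + 1)
      set a := Nat.choose (2 * m + 5) m with ha
      set b := Nat.choose (2 * m + 6) (m + 1) with hb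
      set c := Nat.choose (2 * m + 7) (m + 1) with hc
      have h2' : b * (2 * m + 7) = c * (m + 6) := by
        have : 2 * m + 6 + 1 - (m + 1) = m + 6 := by omega
        simpa [this] using h2
      have h1' : (2 * m + 6) * a = b * (m + 1) := by
        simpa [Nat.succ_eq_add_one] using h1
      have key : c * ((m + 6) * (m + 1)) = (2 * m + 6) * (2 * m + 7) * a := by
        nlinarith [h1', h2']
      have hgoal : Nat.choose (2 * (m + 1) + 5) (m + 1) = c := by
        have : 2 * (m + 1) + 5 = 2 * m + 7 := by omega
        rw [this]
      rw [hgoal]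
      have hP : (0:ℕ) < 2 ^ (2 * m + 2) := Nat.pow_pos (by norm_num)
      have hlt : c * ((m + 6) * (m + 1)) < (4 * 2 ^ (2 * m + 2)) * ((m + 6) * (m + 1)) := by
        rw [key]
        calc (2 * m + 6) * (2 * m + 7) * a < (2 * m + 6) * (2 * m + 7) * 2 ^ (2 * m + 2) := by
              exact (mul_lt_mul_iff_right₀ (by positivity)).mpr ih
          _ ≤ (4 * 2 ^ (2 * m + 2)) * ((m + 6) * (m + 1)) := by nlinarith [hP]
      have := Nat.lt_of_mul_lt_mul_right hlt
      have hpow : 2 ^ (2 * (m + 1) + 2) = 4 * 2 ^ (2 * m + 2) := by ring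
      omega

/-- For all integers n ≥ 3, C(2n − 1, n − 3) < 2^{2n − 4}. -/
theorem stmt18 (n : ℕ) (hn : 3 ≤ n) :
    Nat.choose (2 * n - 1) (n - 3) < 2 ^ (2 * n - 4) := by
  obtain ⟨m, rfl⟩ : ∃ m, n = m + 3 := ⟨n - 3, by omega⟩
  have h1 : 2 * (m + 3) - 1 = 2 * m + 5 := by omega
  have h2 : m + 3 - 3 = m := by omega
  have h3 : 2 * (m + 3) - 4 = 2 * m + 2 := by omega
  rw [h1, h2, h3]
  exact aux18 m
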